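/- Let G be a simple graph on a finite vertex type V, let φ : Sym2 V → Fin K assign a class to each edge, and let c : Sym2 V → ℝ≥0 assign a weight to each edge. Suppose π* is a path from s to g whose key (θ(π*), weight(π*)) is minimal, with respect to the lexicographic order combining the colex order on class-count vectors and the usual order on weights, among all paths from s to g, and suppose the underlying walk of π* decomposes as the concatenation of a walk p₁ from s to v and a walk p₂ from v to g. Then p₁ is key-minimal among all walks from s to v: for every walk w from s to v, (θ(p₁), weight(p₁)) ≤ (θ(w), weight(w)) in the same lexicographic order. -/

import Mathlib

open scoped NNReal

/-- The colexicographic strict order on `Fin K → ℕ`. -/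
def ColexLt {K : ℕ} (a b : Fin K → ℕ) : Prop :=
  ∃ k, a k < b k ∧ ∀ j, k < j → a j = b j

/-- The colexicographic order: `a ≤_colex b` iff `a <_colex b` or `a = b`. -/
def ColexLe {K : ℕ} (a b : Fin K → ℕ) : Prop :=
  ColexLt a b ∨ a = b

/-- The class-count vector of a walk: `theta G φ w k` is the number of edges of `w`
(with multiplicity) whose class under `φ` is `k`. -/
def theta {V : Type*} {K : ℕ} (G : SimpleGraph V) (φ : Sym2 V → Fin K)
    {s g : V} (w : G.Walk s g) : Fin K → ℕ :=
  fun k => w.edges.countP (fun e => decide (φ e = k))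

/-- The total weight of a walk: the sum of `c` over its edges (with multiplicity). -/
def weight {V : Type*} (G : SimpleGraph V) (c : Sym2 V → ℝ≥0)
    {s g : V} (w : G.Walk s g) : ℝ≥0 :=
  (w.edges.map c).sum

/-- The largest class `k` with `theta G φ w k > 0`, for a walk with at least one edge. -/
def maxClass {V : Type*} {K : ℕ} (G : SimpleGraph V) (φ : Sym2 V → Fin K)
    {s g : V} (w : G.Walk s g) (hw : w.edges ≠ []) : Fin K :=
  (Finset.univ.filter fun k => 0 < theta G φ w k).max' (by
    obtain ⟨e, he⟩ := List.exists_mem_of_ne_nil w.edges hw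
    refine ⟨φ e, ?_⟩
    simp only [Finset.mem_filter, Finset.mem_univ, true_and, theta]
    exact Finset.mem_filter.mpr ⟨Finset.mem_univ _, List.countP_pos_iff.mpr ⟨e, he, by simp⟩⟩)

/-- A walk between distinct vertices has at least one edge. -/
theorem edges_ne_nil_of_ne {V : Type*} {G : SimpleGraph V} {s g : V}
    (h : s ≠ g) (w : G.Walk s g) : w.edges ≠ [] := by
  cases w with
  | nil => exact absurd rfl h
  | cons h' p => simp

/-- Lexicographic order on pairs `(maxClass, count)`. -/
def PairLe {K : ℕ} (p q : Fin K × ℕ) : Prop :=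
  p.1 < q.1 ∨ (p.1 = q.1 ∧ p.2 ≤ q.2)

/-- Lexicographic order on keys `(class-count vector, weight)`:
first the colex order on the vectors, then the usual order on weights. -/
def KeyLe {K : ℕ} (p q : (Fin K → ℕ) × ℝ≥0) : Prop :=
  ColexLt p.1 q.1 ∨ (p.1 = q.1 ∧ p.2 ≤ q.2)

/- ### Auxiliary lemmas -/

lemma dropUntil_edges_sublist {V : Type*} [DecidableEq V] {G : SimpleGraph V} {u v w : V}
    (p : G.Walk u v) (h : w ∈ p.support) :
    (p.dropUntil w h).edges.Sublist p.edges := by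
  conv_rhs => rw [← p.take_spec h]
  rw [SimpleGraph.Walk.edges_append]
  exact List.sublist_append_right _ _

lemma bypass_edges_sublist {V : Type*} [DecidableEq V] {G : SimpleGraph V} {u v : V}
    (p : G.Walk u v) : p.bypass.edges.Sublist p.edges := by
  induction p with
  | nil => simp [SimpleGraph.Walk.bypass]
  | cons h p ih =>
    simp only [SimpleGraph.Walk.bypass]
    split_ifs with hb
    · exact ((dropUntil_edges_sublist _ hb).trans ih).trans (List.sublist_cons_self _ _)
    · rw [SimpleGraph.Walk.edges_cons]
      exact ih.cons₂ _

lemma theta_append {V : Type*} {K : ℕ} (G : SimpleGraph V) (φ : Sym2 V → Fin K)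
    {s v g : V} (p : G.Walk s v) (q : G.Walk v g) (k : Fin K) :
    theta G φ (p.append q) k = theta G φ p k + theta G φ q k := by
  simp [theta, SimpleGraph.Walk.edges_append, List.countP_append]

lemma weight_append {V : Type*} (G : SimpleGraph V) (c : Sym2 V → ℝ≥0)
    {s v g : V} (p : G.Walk s v) (q : G.Walk v g) :
    weight G c (p.append q) = weight G c p + weight G c q := by
  simp [weight, SimpleGraph.Walk.edges_append]

lemma keyLe_of_pointwise {K : ℕ} {a b : Fin K → ℕ} {x y : ℝ≥0}
    (h : ∀ k, a k ≤ b k) (hxy : x ≤ y) : KeyLe (a, x) (b, y) := by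
  by_cases hab : a = b
  · exact Or.inr ⟨hab, hxy⟩
  · left
    have hne : (Finset.univ.filter fun k => a k ≠ b k).Nonempty := by
      rcases Function.ne_iff.mp hab with ⟨k, hk⟩
      exact ⟨k, by simp [hk]⟩
    set k := (Finset.univ.filter fun k => a k ≠ b k).max' hne with hkdef
    have hkmem := (Finset.univ.filter fun k => a k ≠ b k).max'_mem hne
    simp only [Finset.mem_filter, Finset.mem_univ, true_and] at hkmem
    refine ⟨k, lt_of_le_of_ne (h k) hkmem, fun j hj => ?_⟩
    by_contra hjne
    exact absurd (Finset.le_max' _ j (by simp [hjne])) (not_le_of_gt hj)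

lemma colexLt_trans {K : ℕ} {a b c : Fin K → ℕ}
    (h1 : ColexLt a b) (h2 : ColexLt b c) : ColexLt a c := by
  obtain ⟨k1, hk1, he1⟩ := h1
  obtain ⟨k2, hk2, he2⟩ := h2
  rcases lt_trichotomy k1 k2 with h | h | h
  · exact ⟨k2, (he1 k2 h) ▸ hk2, fun j hj => (he1 j (h.trans hj)).trans (he2 j hj)⟩
  · exact ⟨k1, hk1.trans (h ▸ hk2), fun j hj => (he1 j hj).trans (he2 j (h ▸ hj))⟩
  · exact ⟨k1, lt_of_lt_of_le hk1 ((he2 k1 h) ▸ le_refl _ : b k1 ≤ c k1),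
      fun j hj => (he1 j hj).trans (he2 j (h.trans hj))⟩

lemma keyLe_trans {K : ℕ} {p q r : (Fin K → ℕ) × ℝ≥0}
    (h1 : KeyLe p q) (h2 : KeyLe q r) : KeyLe p r := by
  rcases h1 with h1 | ⟨he1, hw1⟩ <;> rcases h2 with h2 | ⟨he2, hw2⟩
  · exact Or.inl (colexLt_trans h1 h2)
  · exact Or.inl (he2 ▸ h1)
  · exact Or.inl (he1 ▸ h2)
  · exact Or.inr ⟨he1.trans he2, hw1.trans hw2⟩

lemma keyLe_cancel {K : ℕ} {a b d : Fin K → ℕ} {x y t : ℝ≥0}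
    (h : KeyLe (fun k => a k + d k, x + t) (fun k => b k + d k, y + t)) :
    KeyLe (a, x) (b, y) := by
  simp only [KeyLe, ColexLt] at h ⊢
  rcases h with ⟨k, hk, he⟩ | ⟨he, hw⟩
  · exact Or.inl ⟨k, by omega, fun j hj => by have := he j hj; omega⟩
  · refine Or.inr ⟨funext fun k => ?_, le_of_add_le_add_right hw⟩
    have := congrFun he k; omega

/-- If a key-minimal path `π*` from `s` to `g` decomposes as the concatenation of a walk
`p₁` from `s` to `v` and a walk `p₂` from `v` to `g`, then `p₁` is key-minimal among all
walks from `s` to `v`. -/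
theorem prefix_of_optimal_is_optimal {V : Type*} [Fintype V] {K : ℕ}
    (G : SimpleGraph V) (φ : Sym2 V → Fin K) (c : Sym2 V → ℝ≥0) {s v g : V}
    (π : G.Walk s g) (hπ : π.IsPath)
    (hmin : ∀ p : G.Walk s g, p.IsPath →
      KeyLe (theta G φ π, weight G c π) (theta G φ p, weight G c p))
    (p₁ : G.Walk s v) (p₂ : G.Walk v g) (hdecomp : π = p₁.append p₂) :
    ∀ w : G.Walk s v,
      KeyLe (theta G φ p₁, weight G c p₁) (theta G φ w, weight G c w) := by
  classical
  intro w
  set wp := w.append p₂ with hwp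
  have h1 : KeyLe (theta G φ π, weight G c π)
      (theta G φ wp.bypass, weight G c wp.bypass) :=
    hmin wp.bypass wp.bypass_isPath
  have hsub := bypass_edges_sublist wp
  have h2 : KeyLe (theta G φ wp.bypass, weight G c wp.bypass)
      (theta G φ wp, weight G c wp) := by
    refine keyLe_of_pointwise (fun k => hsub.countP_le) ?_
    exact List.Sublist.sum_le_sum (hsub.map c) (fun a _ => zero_le)
  have h3 := keyLe_trans h1 h2
  rw [hdecomp] at h3
  have hθπ : theta G φ (p₁.append p₂) = fun k => theta G φ p₁ k + theta G φ p₂ k :=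
    funext (theta_append G φ p₁ p₂)
  have hθw : theta G φ wp = fun k => theta G φ w k + theta G φ p₂ k :=
    funext (theta_append G φ w p₂)
  rw [hθπ, hθw, weight_append, weight_append] at h3
  exact keyLe_cancel h3
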